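/- Let n ≥ 1 and let γ ≥ 0, μ₀ ≥ 0 with γ + μ₀ > 0, μ₁ > 0, η₁ > 0, and μⱼ > 0, ηⱼ > 0 for j = 2,…,n, and let K > 0. Define, for real σ ≠ 0, the complex compliance J_V(σ) = 1/μ₁ + 1/(iση₁) + Σ_{j=2}^n 1/(μⱼ + iσηⱼ) and the complex Love number k(σ) = K/(γ + μ₀ + J_V(σ)⁻¹). Then J_V(σ) ≠ 0 for all real σ ≠ 0, and |k(σ)| ≤ K/(γ + μ₀) for every real σ ≠ 0, where K/(γ + μ₀) is the value k(0) obtained in the limit σ → 0. -/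

import Mathlib

/-- For the generalized Voigt rheology with prestress (springs `γ`, `μ₀`,
a Maxwell element `(μ₁, η₁)` in series with Kelvin–Voigt elements `(μs j, ηs j)`, `j = 2,…,n`),
the compliance `J_V(σ)` is nonzero for `σ ≠ 0` and the Love number
`k(σ) = K/(γ + μ₀ + J_V(σ)⁻¹)` satisfies `|k(σ)| ≤ K/(γ+μ₀) = k(0)`. -/
theorem stmt_1 (n : ℕ) (hn : 1 ≤ n) (γ μ₀ μ₁ η₁ K : ℝ) (μs ηs : Fin (n - 1) → ℝ)
    (hγ : 0 ≤ γ) (hμ₀ : 0 ≤ μ₀) (hγμ₀ : 0 < γ + μ₀) (hμ₁ : 0 < μ₁) (hη₁ : 0 < η₁)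
    (hμs : ∀ j, 0 < μs j) (hηs : ∀ j, 0 < ηs j) (hK : 0 < K)
    (JV : ℝ → ℂ)
    (hJV : ∀ σ : ℝ, σ ≠ 0 → JV σ =
      1 / (μ₁ : ℂ) + 1 / (Complex.I * σ * η₁) +
        ∑ j, 1 / ((μs j : ℂ) + Complex.I * σ * ηs j))
    (k : ℝ → ℂ) (hk : ∀ σ : ℝ, σ ≠ 0 → k σ = K / ((γ : ℂ) + μ₀ + (JV σ)⁻¹)) :
    ∀ σ : ℝ, σ ≠ 0 → JV σ ≠ 0 ∧ ‖k σ‖ ≤ K / (γ + μ₀) := by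
  intro σ hσ
  -- real part of JV σ is positive
  have hre : 0 < (JV σ).re := by
    rw [hJV σ hσ]
    have h1 : ((1 : ℂ) / (μ₁ : ℂ)).re = μ₁⁻¹ := by
      rw [one_div, ← Complex.ofReal_inv, Complex.ofReal_re]
    have h2 : ((1 : ℂ) / (Complex.I * σ * η₁)).re = 0 := by
      rw [one_div, Complex.inv_re]
      simp
    have h3 : 0 ≤ (∑ j, (1 : ℂ) / ((μs j : ℂ) + Complex.I * σ * ηs j)).re := by
      rw [Complex.re_sum]
      apply Finset.sum_nonneg
      intro j _
      rw [one_div, Complex.inv_re]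
      apply div_nonneg _ (Complex.normSq_nonneg _)
      simp [(hμs j).le]
    simp only [Complex.add_re, h1, h2, add_zero]
    have : 0 < μ₁⁻¹ := inv_pos.mpr hμ₁
    linarith
  have hJ0 : JV σ ≠ 0 := by
    intro h
    rw [h] at hre
    simp at hre
  refine ⟨hJ0, ?_⟩
  -- real part of (JV σ)⁻¹ is nonneg
  have hinvre : 0 ≤ ((JV σ)⁻¹).re := by
    rw [Complex.inv_re]
    exact div_nonneg hre.le (Complex.normSq_nonneg _)
  set D : ℂ := (γ : ℂ) + μ₀ + (JV σ)⁻¹ with hD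
  have hDre : γ + μ₀ ≤ D.re := by
    simp only [hD, Complex.add_re, Complex.ofReal_re]
    linarith
  have hDabs : γ + μ₀ ≤ ‖D‖ := le_trans hDre (Complex.re_le_norm D)
  have hDpos : 0 < ‖D‖ := lt_of_lt_of_le hγμ₀ hDabs
  rw [hk σ hσ, norm_div, Complex.norm_real, Real.norm_eq_abs, abs_of_pos hK]
  exact div_le_div_of_nonneg_left hK.le hγμ₀ hDabs
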